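/- Let P be a left-turning lattice multi-polygon with all signs +, i.e., for every triple of consecutive points u, v, w not on a common line one has det(v − u, w − u) > 0, and ε = + on every side. Then B(P) ≥ 2C(P) + 1 and C(P) ≥ 1. -/

import Mathlib

open MeasureTheory

/-- The determinant of two vectors in `ℤ²`. -/
def det (p q : ℤ × ℤ) : ℤ := p.1 * q.2 - p.2 * q.1

/-- The dot product of two vectors in `ℤ²`. -/
def dot (p q : ℤ × ℤ) : ℤ := p.1 * q.1 + p.2 * q.2

/-- A lattice point regarded as a complex number. -/
noncomputable def toC (p : ℤ × ℤ) : ℂ := ⟨(p.1 : ℝ), (p.2 : ℝ)⟩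

/-- A lattice multi-polygon: a closed piecewise-linear loop `v` with vertices in
`ℤ²` and nondegenerate sides, together with a sign `ε i ∈ {±1}` on each side
`v_i v_{i+1}`, subject to the condition (⋆): whenever `v_{i-1}, v_i, v_{i+1}` are
collinear, the signs of the two adjacent sides agree if `v_i` lies between
`v_{i-1}` and `v_{i+1}` (the two side directions have positive dot product), and
differ if the loop reverses at `v_i` (negative dot product), i.e. if `v_{i-1}`
lies on `v_i v_{i+1}` or `v_{i+1}` lies on `v_{i-1} v_i`. -/
def IsMultiPolygon {d : ℕ} (v : ZMod d → ℤ × ℤ) (ε : ZMod d → ℤ) : Prop :=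
  (∀ i, ε i = 1 ∨ ε i = -1) ∧
  (∀ i, v i ≠ v (i + 1)) ∧
  (∀ i, det (v i - v (i - 1)) (v (i + 1) - v i) = 0 →
    (0 < dot (v i - v (i - 1)) (v (i + 1) - v i) → ε (i - 1) = ε i) ∧
    (dot (v i - v (i - 1)) (v (i + 1) - v i) < 0 → ε (i - 1) ≠ ε i))

/-- The winding number `d_P(x)` of the loop `v_1 → … → v_d → v_1` around a point
`x` of the plane (valid off the loop). -/
noncomputable def windingAt {d : ℕ} [NeZero d] (v : ZMod d → ℤ × ℤ) (x : ℂ) : ℝ :=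
  (2 * Real.pi)⁻¹ * ∑ i : ZMod d, Complex.arg ((toC (v (i + 1)) - x) / (toC (v i) - x))

/-- `A(P)`: the integral over the plane of the winding number of the loop. -/
noncomputable def polyA {d : ℕ} [NeZero d] (v : ZMod d → ℤ × ℤ) : ℝ :=
  ∫ x : ℂ, windingAt v x

/-- `B(P) = Σ ε_i |v_i v_{i+1}|`, where `|v_i v_{i+1}|` is the number of lattice
points on the side `v_i v_{i+1}` minus one, i.e. the gcd of the coordinate
differences. -/
def polyB {d : ℕ} [NeZero d] (v : ZMod d → ℤ × ℤ) (ε : ZMod d → ℤ) : ℤ :=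
  ∑ i : ZMod d, ε i * (Int.gcd ((v (i + 1)).1 - (v i).1) ((v (i + 1)).2 - (v i).2) : ℤ)

/-- The normal vector `n_i` to the side `v_i v_{i+1}`: the 90° (counterclockwise)
rotation of `ε_i n_i` points along `v_{i+1} − v_i`, so
`n_i = −i · ε_i · (v_{i+1} − v_i)` as a complex number. -/
noncomputable def normalVec {d : ℕ} (v : ZMod d → ℤ × ℤ) (ε : ZMod d → ℤ) (i : ZMod d) : ℂ :=
  -Complex.I * (ε i : ℂ) * (toC (v (i + 1)) - toC (v i))

/-- `C(P)`: the rotation number of the sequence of normal vectors `n_1, …, n_d`. -/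
noncomputable def polyC {d : ℕ} [NeZero d] (v : ZMod d → ℤ × ℤ) (ε : ZMod d → ℤ) : ℝ :=
  (2 * Real.pi)⁻¹ *
    ∑ i : ZMod d, Complex.arg (normalVec v ε (i + 1) / normalVec v ε i)

lemma toC_re (p : ℤ × ℤ) : (toC p).re = (p.1 : ℝ) := rfl
lemma toC_im (p : ℤ × ℤ) : (toC p).im = (p.2 : ℝ) := rfl

lemma arg_prod_coe_angle {ι : Type*} (s : Finset ι) (f : ι → ℂ) (hf : ∀ i ∈ s, f i ≠ 0) :
    ((∏ i ∈ s, f i).arg : Real.Angle) = ∑ i ∈ s, ((f i).arg : Real.Angle) := by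
  induction s using Finset.cons_induction with
  | empty => simp [Complex.arg_one]
  | cons a s ha ih =>
    rw [Finset.prod_cons, Finset.sum_cons,
      Complex.arg_mul_coe_angle (hf a (Finset.mem_cons_self a s))
        (Finset.prod_ne_zero_iff.mpr fun i hi => hf i (Finset.mem_cons_of_mem hi)),
      ih fun i hi => hf i (Finset.mem_cons_of_mem hi)]


/-- for a left-turning lattice multi-polygon `P` with all signs
`+` (every triple of consecutive points `u, v, w` not on a common line satisfies
`det(v − u, w − u) > 0`), one has `B(P) ≥ 2C(P) + 1` and `C(P) ≥ 1`. -/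
theorem stmt18 (d : ℕ) [NeZero d] (v : ZMod d → ℤ × ℤ)
    (hmp : IsMultiPolygon v (fun _ => 1))
    (hleft : ∀ i, det (v i - v (i - 1)) (v (i + 1) - v (i - 1)) ≠ 0 →
      0 < det (v i - v (i - 1)) (v (i + 1) - v (i - 1))) :
    2 * polyC v (fun _ => 1) + 1 ≤ (polyB v (fun _ => 1) : ℝ) ∧
    1 ≤ polyC v (fun _ => 1) := by
  classical
  have hπ : (0:ℝ) < Real.pi := Real.pi_pos
  obtain ⟨-, hne, hstar⟩ := hmp
  have hd : 0 < d := Nat.pos_of_ne_zero (NeZero.ne d)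
  haveI : Nonempty (ZMod d) := ⟨0⟩
  set E : ZMod d → ℂ := fun i => toC (v (i + 1)) - toC (v i) with hE
  -- edges are nonzero
  have hEne : ∀ i, E i ≠ 0 := by
    intro i h
    apply hne i
    have h1 : (E i).re = 0 := by rw [h]; simp
    have h2 : (E i).im = 0 := by rw [h]; simp
    simp only [hE, Complex.sub_re, Complex.sub_im, toC_re, toC_im, sub_eq_zero] at h1 h2
    have h1' : (v i).1 = (v (i+1)).1 := by exact_mod_cast h1.symm
    have h2' : (v i).2 = (v (i+1)).2 := by exact_mod_cast h2.symm
    exact Prod.ext h1' h2'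
  have hnsq : ∀ i, 0 < Complex.normSq (E i) := fun i => Complex.normSq_pos.mpr (hEne i)
  -- im and re of edge ratios
  have him : ∀ i, (E (i+1) / E i).im
      = ((det (v (i+1) - v i) (v (i+1+1) - v (i+1)) : ℤ) : ℝ) / Complex.normSq (E i) := by
    intro i
    rw [Complex.div_im]
    simp only [hE, Complex.sub_re, Complex.sub_im, toC_re, toC_im, det,
      Prod.fst_sub, Prod.snd_sub]
    push_cast
    ring
  have hre : ∀ i, (E (i+1) / E i).re
      = ((dot (v (i+1) - v i) (v (i+1+1) - v (i+1)) : ℤ) : ℝ) / Complex.normSq (E i) := by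
    intro i
    rw [Complex.div_re]
    simp only [hE, Complex.sub_re, Complex.sub_im, toC_re, toC_im, dot,
      Prod.fst_sub, Prod.snd_sub]
    push_cast
    ring
  -- left-turning: det of consecutive edges nonneg
  have hdet : ∀ i, 0 ≤ det (v (i+1) - v i) (v (i+1+1) - v (i+1)) := by
    intro i
    by_contra h
    push_neg at h
    have key : det (v (i+1) - v (i+1-1)) (v (i+1+1) - v (i+1-1))
        = det (v (i+1) - v i) (v (i+1+1) - v (i+1)) := by
      simp only [det, add_sub_cancel_right, Prod.fst_sub, Prod.snd_sub]
      ring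
    have := hleft (i+1) (by rw [key]; omega)
    rw [key] at this
    omega
  -- the star condition: if det = 0 then dot ≥ 0
  have hdot : ∀ i, det (v (i+1) - v i) (v (i+1+1) - v (i+1)) = 0 →
      0 ≤ dot (v (i+1) - v i) (v (i+1+1) - v (i+1)) := by
    intro i h0
    have key := (hstar (i+1))
    simp only [add_sub_cancel_right] at key
    have := (key h0).2
    by_contra h
    push_neg at h
    exact (this h) rfl
  set t : ZMod d → ℝ := fun i => (E (i+1) / E i).arg with ht
  have hratne : ∀ i, E (i+1) / E i ≠ 0 := fun i => div_ne_zero (hEne _) (hEne _)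
  have ht0 : ∀ i, 0 ≤ t i := by
    intro i
    rw [ht]
    rw [Complex.arg_nonneg_iff, him i]
    exact div_nonneg (by exact_mod_cast hdet i) (hnsq i).le
  have htpi : ∀ i, t i < Real.pi := by
    intro i
    refine lt_of_le_of_ne (Complex.arg_le_pi _) ?_
    intro h
    rw [Complex.arg_eq_pi_iff] at h
    obtain ⟨hlt, him0⟩ := h
    rw [him i] at him0
    have hd0 : det (v (i+1) - v i) (v (i+1+1) - v (i+1)) = 0 := by
      have := (hnsq i).ne'
      field_simp at him0
      rw [mul_zero] at him0
      exact_mod_cast him0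
    have := hdot i hd0
    rw [hre i] at hlt
    have : (0:ℝ) ≤ ((dot (v (i+1) - v i) (v (i+1+1) - v (i+1)) : ℤ) : ℝ) / Complex.normSq (E i) := by
      have := hdot i hd0
      have h2 := (hnsq i).le
      positivity
    linarith
  -- polyC in terms of edge ratios
  have hCterm : ∀ i : ZMod d,
      normalVec v (fun _ => 1) (i+1) / normalVec v (fun _ => 1) i = E (i+1) / E i := by
    intro i
    simp only [normalVec, Int.cast_one, mul_one, hE]
    exact mul_div_mul_left _ _ (neg_ne_zero.mpr Complex.I_ne_zero)
  set S : ℝ := ∑ i : ZMod d, t i with hS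
  have hpolyC : polyC v (fun _ => 1) = (2 * Real.pi)⁻¹ * S := by
    rw [polyC, hS]
    congr 1
    refine Finset.sum_congr rfl fun i _ => ?_
    rw [hCterm i, ht]
  -- the product of ratios is 1
  have hprod : (∏ i : ZMod d, (E (i+1) / E i)) = 1 := by
    rw [Finset.prod_div_distrib]
    have : (∏ i : ZMod d, E (i+1)) = ∏ i : ZMod d, E i :=
      Fintype.prod_equiv (Equiv.addRight (1 : ZMod d)) (fun i => E (i+1)) E
        (fun x => by simp [Equiv.coe_addRight])
    rw [this, div_self (Finset.prod_ne_zero_iff.mpr fun i _ => hEne i)]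
  -- the angle sum is 0 mod 2π
  have hangle : ((S : ℝ) : Real.Angle) = ((0:ℝ) : Real.Angle) := by
    have h1 := arg_prod_coe_angle Finset.univ (fun i : ZMod d => E (i+1) / E i)
      (fun i _ => hratne i)
    rw [hprod] at h1
    have h2 : ((S : ℝ) : Real.Angle) = ∑ i : ZMod d, ((t i : ℝ) : Real.Angle) := by
      rw [hS]
      exact map_sum Real.Angle.coeHom t Finset.univ
    rw [h2, ← h1, Complex.arg_one, Real.Angle.coe_zero]
  obtain ⟨k, hk⟩ := Real.Angle.angle_eq_iff_two_pi_dvd_sub.mp hangle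
  rw [sub_zero] at hk
  -- S > 0
  have hS0 : 0 ≤ S := Finset.sum_nonneg fun i _ => ht0 i
  have hsum0 : (∑ i : ZMod d, E i) = 0 := by
    rw [hE]
    rw [Finset.sum_sub_distrib]
    have : (∑ i : ZMod d, toC (v (i+1))) = ∑ i : ZMod d, toC (v i) :=
      Fintype.sum_equiv (Equiv.addRight (1 : ZMod d)) (fun i => toC (v (i+1)))
        (fun i => toC (v i)) (fun x => by simp [Equiv.coe_addRight])
    rw [this, sub_self]
  have hSpos : 0 < S := by
    rcases hS0.lt_or_eq with h | h
    · exact h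
    · exfalso
      have hall : ∀ i ∈ Finset.univ, t i = 0 :=
        (Finset.sum_eq_zero_iff_of_nonneg fun i _ => ht0 i).mp h.symm
      have hpos : ∀ i : ZMod d, ∃ c : ℝ, 0 < c ∧ E (i+1) = (c : ℂ) * E i := by
        intro i
        have h0 : t i = 0 := hall i (Finset.mem_univ i)
        rw [ht] at h0
        rw [Complex.arg_eq_zero_iff] at h0
        obtain ⟨hre0, him0⟩ := h0
        set z := E (i+1) / E i with hz
        have hzre : z = ((z.re : ℝ) : ℂ) := by
          apply Complex.ext <;> simp [him0]
        have hzpos : 0 < z.re := by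
          rcases hre0.lt_or_eq with h' | h'
          · exact h'
          · exfalso; apply hratne i; rw [← hz, hzre, ← h']; simp
        refine ⟨z.re, hzpos, ?_⟩
        rw [← hzre, hz, div_mul_cancel₀ _ (hEne i)]
      have hmul : ∀ n : ℕ, ∃ r : ℝ, 0 < r ∧ E ((n : ZMod d)) = (r : ℂ) * E 0 := by
        intro n
        induction n with
        | zero => exact ⟨1, one_pos, by simp⟩
        | succ m ih =>
          obtain ⟨r, hr, hrE⟩ := ih
          obtain ⟨c, hc, hcE⟩ := hpos ((m : ZMod d))
          refine ⟨c * r, mul_pos hc hr, ?_⟩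
          push_cast
          rw [hcE, hrE]
          ring
      have hall2 : ∀ i : ZMod d, ∃ r : ℝ, 0 < r ∧ E i = (r : ℂ) * E 0 := by
        intro i
        have := hmul i.val
        rwa [ZMod.natCast_rightInverse i] at this
      choose r hrpos hrE using hall2
      have : (∑ i : ZMod d, E i) = ((∑ i : ZMod d, r i : ℝ) : ℂ) * E 0 := by
        push_cast
        rw [Finset.sum_mul]
        exact Finset.sum_congr rfl fun i _ => hrE i
      rw [hsum0] at this
      have hrsum : 0 < ∑ i : ZMod d, r i :=
        Finset.sum_pos (fun i _ => hrpos i) Finset.univ_nonempty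
      exact (mul_ne_zero (Complex.ofReal_ne_zero.mpr hrsum.ne') (hEne 0)) this.symm
  -- S = 2π k
  have hk' : S = 2 * Real.pi * k := hk
  have hkpos : 0 < k := by
    by_contra h
    push_neg at h
    have hk0 : (k:ℝ) ≤ 0 := by exact_mod_cast h
    nlinarith
  have hCval : polyC v (fun _ => 1) = (k : ℝ) := by
    rw [hpolyC, hk']
    field_simp
  -- B ≥ d
  have hgcd : ∀ i : ZMod d,
      (1:ℤ) ≤ (Int.gcd ((v (i + 1)).1 - (v i).1) ((v (i + 1)).2 - (v i).2) : ℤ) := by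
    intro i
    have hne0 : Int.gcd ((v (i + 1)).1 - (v i).1) ((v (i + 1)).2 - (v i).2) ≠ 0 := by
      intro h
      obtain ⟨h1, h2⟩ := Int.gcd_eq_zero_iff.mp h
      apply hne i
      rw [sub_eq_zero] at h1 h2
      exact Prod.ext h1.symm h2.symm
    exact_mod_cast Nat.one_le_iff_ne_zero.mpr hne0
  have hB : (d : ℤ) ≤ polyB v (fun _ => 1) := by
    rw [polyB]
    calc (d:ℤ) = ∑ _i : ZMod d, 1 := by
          simp [Finset.card_univ, ZMod.card]
      _ ≤ _ := Finset.sum_le_sum fun i _ => by simpa using hgcd i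
  -- S < d π
  have hSlt : S < d * Real.pi := by
    calc S < ∑ _i : ZMod d, Real.pi :=
          Finset.sum_lt_sum_of_nonempty Finset.univ_nonempty (fun i _ => htpi i)
      _ = d * Real.pi := by
          rw [Finset.sum_const, Finset.card_univ, ZMod.card, nsmul_eq_mul]
  have h2k : 2 * k < (d:ℤ) := by
    have h1 : 2 * (k:ℝ) < d := by rw [hk'] at hSlt; nlinarith
    exact_mod_cast h1
  constructor
  · rw [hCval]
    have h1 : 2 * k + 1 ≤ (d:ℤ) := by omega
    have h2 : (2*(k:ℝ)+1 : ℝ) ≤ (d:ℝ) := by exact_mod_cast h1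
    have h3 : (d:ℝ) ≤ (polyB v (fun _ => 1) : ℝ) := by exact_mod_cast hB
    linarith
  · rw [hCval]; exact_mod_cast hkpos
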